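/- Let κ ∈ ℝ, M ∈ ℕ, let Ω ⊆ ℝ² be open, (x*,y*) ∈ Ω, and let u : ℝ² → ℂ be (M+1)-times continuously differentiable on Ω. Set f := Δu + κ²u on Ω (where Δ = ∂²/∂x² + ∂²/∂y²). Then for every (m,n) ∈ Λ_{M+1}^2 (i.e. m ≥ 2 and m+n ≤ M+1): u^{(m,n)} = (−1)^{⌊m/2⌋} Σ_{q=0}^{⌊m/2⌋} C(⌊m/2⌋,q) κ^{2q} u^{(odd(m), 2⌊m/2⌋+n−2q)} + Σ_{q=1}^{⌊m/2⌋} Σ_{j=0}^{q−1} (−1)^{q−1} C(q−1,j) κ^{2(q−j−1)} f^{(m−2q, n+2j)}, where all derivatives are evaluated at (x*,y*) and C(a,b) is the binomial coefficient. -/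

import Mathlib

open scoped BigOperators
open Complex

/-- The index set `Λ_N = {(m,n) ∈ ℕ×ℕ : m+n ≤ N}`. -/
def Lam (N : ℕ) : Finset (ℕ × ℕ) :=
  (Finset.range (N + 1) ×ˢ Finset.range (N + 1)).filter (fun p => p.1 + p.2 ≤ N)

/-- `Λ_N^1 = {(m,n) ∈ Λ_N : m ≤ 1}`. -/
def Lam1 (N : ℕ) : Finset (ℕ × ℕ) := (Lam N).filter (fun p => p.1 ≤ 1)

/-- `Λ_N^2 = Λ_N \ Λ_N^1 = {(m,n) ∈ Λ_N : m ≥ 2}`. -/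
def Lam2 (N : ℕ) : Finset (ℕ × ℕ) := (Lam N).filter (fun p => 2 ≤ p.1)

/-- Mixed partial derivative `u^{(m,n)} = ∂^{m+n} u / ∂x^m ∂y^n` at `(x,y)`. -/
noncomputable def pd (u : ℝ × ℝ → ℂ) (m n : ℕ) (x y : ℝ) : ℂ :=
  iteratedDeriv m (fun s => iteratedDeriv n (fun t => u (s, t)) y) x

/-- `f = Δu + κ² u`. -/
noncomputable def helm (κ : ℝ) (u : ℝ × ℝ → ℂ) : ℝ × ℝ → ℂ :=
  fun p => pd u 2 0 p.1 p.2 + pd u 0 2 p.1 p.2 + (κ : ℂ) ^ 2 * u p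

/-- The polynomial `G_{N,m,n}(x,y)`; the sum is empty (0) when `m+n > N`. -/
noncomputable def Gpoly (κ : ℝ) (N m n : ℕ) (x y : ℂ) : ℂ :=
  if m + n ≤ N then
    ∑ p ∈ Finset.range ((N - m - n) / 2 + 1),
      ∑ ℓ ∈ Finset.Icc p (p + n / 2),
        (-1 : ℂ) ^ ℓ * (Nat.choose ℓ p : ℂ) * (κ : ℂ) ^ (2 * p) *
          x ^ (m + 2 * ℓ) * y ^ (n + 2 * p - 2 * ℓ) /
          ((Nat.factorial (m + 2 * ℓ) : ℂ) * (Nat.factorial (n + 2 * p - 2 * ℓ) : ℂ))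
  else 0

/-- The polynomial `H_{N,m,n}(x,y)`; the sum is empty (0) when `m+n+2 > N`. -/
noncomputable def Hpoly (κ : ℝ) (N m n : ℕ) (x y : ℂ) : ℂ :=
  if m + n + 2 ≤ N then
    ∑ p ∈ Finset.range ((N - 2 - m - n) / 2 + 1),
      ∑ ℓ ∈ Finset.Icc (p + 1) (p + n / 2 + 1),
        (-1 : ℂ) ^ (ℓ - 1) * (Nat.choose (ℓ - 1) p : ℂ) * (κ : ℂ) ^ (2 * p) *
          x ^ (m + 2 * ℓ) * y ^ (2 * p + n + 2 - 2 * ℓ) /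
          ((Nat.factorial (m + 2 * ℓ) : ℂ) * (Nat.factorial (2 * p + n + 2 - 2 * ℓ) : ℂ))
  else 0


noncomputable def Px (v : ℝ × ℝ → ℂ) : ℝ × ℝ → ℂ := fun p => deriv (fun s => v (s, p.2)) p.1
noncomputable def Py (v : ℝ × ℝ → ℂ) : ℝ × ℝ → ℂ := fun p => deriv (fun t => v (p.1, t)) p.2


lemma iter_y : ∀ (n : ℕ) (u : ℝ × ℝ → ℂ) (s y : ℝ), iteratedDeriv n (fun t => u (s, t)) y = Py^[n] u (s, y) := by
  intro n
  induction n with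
  | zero => intro u s y; simp
  | succ n ih =>
    intro u s y
    rw [iteratedDeriv_succ']
    have : deriv (fun t => u (s, t)) = fun t => Py u (s, t) := rfl
    rw [this, ih (Py u) s y, Function.iterate_succ_apply]

lemma iter_x : ∀ (m : ℕ) (v : ℝ × ℝ → ℂ) (x y : ℝ), iteratedDeriv m (fun s => v (s, y)) x = Px^[m] v (x, y) := by
  intro m
  induction m with
  | zero => intro v x y; simp
  | succ m ih =>
    intro v x y
    rw [iteratedDeriv_succ']
    have : deriv (fun s => v (s, y)) = fun s => Px v (s, y) := rfl
    rw [this, ih (Px v) x y, Function.iterate_succ_apply]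

lemma pd_eq (u : ℝ × ℝ → ℂ) (m n : ℕ) (x y : ℝ) :
    pd u m n x y = Px^[m] (Py^[n] u) (x, y) := by
  unfold pd
  have : (fun s => iteratedDeriv n (fun t => u (s, t)) y) = fun s => Py^[n] u (s, y) := by
    funext s; exact iter_y n u s y
  rw [this, iter_x]

section congrs
variable {Ω : Set (ℝ × ℝ)} (hΩ : IsOpen Ω)

lemma Py_congr (hΩ : IsOpen Ω) {v w : ℝ × ℝ → ℂ} (h : ∀ p ∈ Ω, v p = w p) :
    ∀ p ∈ Ω, Py v p = Py w p := by
  intro p hp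
  apply Filter.EventuallyEq.deriv_eq
  have : ∀ᶠ t in nhds p.2, (p.1, t) ∈ Ω := by
    have : Continuous fun t : ℝ => (p.1, t) := by fun_prop
    exact this.continuousAt.preimage_mem_nhds (hΩ.mem_nhds (by simpa using hp))
  filter_upwards [this] with t ht using h _ ht

lemma Px_congr (hΩ : IsOpen Ω) {v w : ℝ × ℝ → ℂ} (h : ∀ p ∈ Ω, v p = w p) :
    ∀ p ∈ Ω, Px v p = Px w p := by
  intro p hp
  apply Filter.EventuallyEq.deriv_eq
  have : ∀ᶠ s in nhds p.1, (s, p.2) ∈ Ω := by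
    have : Continuous fun s : ℝ => (s, p.2) := by fun_prop
    exact this.continuousAt.preimage_mem_nhds (hΩ.mem_nhds (by simpa using hp))
  filter_upwards [this] with s hs using h _ hs

lemma Py_iter_congr (hΩ : IsOpen Ω) : ∀ (n : ℕ) (v w : ℝ × ℝ → ℂ), (∀ p ∈ Ω, v p = w p) →
    ∀ p ∈ Ω, Py^[n] v p = Py^[n] w p := by
  intro n
  induction n with
  | zero => intro v w h p hp; exact h p hp
  | succ n ih =>
    intro v w h p hp
    rw [Function.iterate_succ_apply, Function.iterate_succ_apply]
    exact ih (Py v) (Py w) (Py_congr hΩ h) p hp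

lemma Px_iter_congr (hΩ : IsOpen Ω) : ∀ (n : ℕ) (v w : ℝ × ℝ → ℂ), (∀ p ∈ Ω, v p = w p) →
    ∀ p ∈ Ω, Px^[n] v p = Px^[n] w p := by
  intro n
  induction n with
  | zero => intro v w h p hp; exact h p hp
  | succ n ih =>
    intro v w h p hp
    rw [Function.iterate_succ_apply, Function.iterate_succ_apply]
    exact ih (Px v) (Px w) (Px_congr hΩ h) p hp

end congrs

lemma Px_eq_fderiv {v : ℝ × ℝ → ℂ} {p : ℝ × ℝ} (h : DifferentiableAt ℝ v p) :
    Px v p = fderiv ℝ v p (1, 0) := by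
  have hin : HasDerivAt (fun s : ℝ => (s, p.2)) ((1 : ℝ), (0 : ℝ)) p.1 :=
    HasDerivAt.prodMk (hasDerivAt_id p.1) (hasDerivAt_const p.1 p.2)
  have := (h.hasFDerivAt.comp_hasDerivAt p.1 (by simpa using hin))
  simpa [Px, Function.comp_def] using this.deriv

lemma Py_eq_fderiv {v : ℝ × ℝ → ℂ} {p : ℝ × ℝ} (h : DifferentiableAt ℝ v p) :
    Py v p = fderiv ℝ v p (0, 1) := by
  have hin : HasDerivAt (fun t : ℝ => (p.1, t)) ((0 : ℝ), (1 : ℝ)) p.2 :=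
    HasDerivAt.prodMk (hasDerivAt_const p.2 p.1) (hasDerivAt_id p.2)
  have := (h.hasFDerivAt.comp_hasDerivAt p.2 (by simpa using hin))
  simpa [Py, Function.comp_def] using this.deriv

section smooth
variable {Ω : Set (ℝ × ℝ)}

lemma Px_smooth (hΩ : IsOpen Ω) {v : ℝ × ℝ → ℂ} {K : ℕ}
    (hv : ContDiffOn ℝ (K + 1 : ℕ) v Ω) : ContDiffOn ℝ (K : ℕ) (Px v) Ω := by
  have hf : ContDiffOn ℝ (K : ℕ) (fderiv ℝ v) Ω := by
    apply hv.fderiv_of_isOpen hΩ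
    exact_mod_cast le_refl _
  have h2 : ContDiffOn ℝ (K : ℕ) (fun p => fderiv ℝ v p (1, 0)) Ω :=
    hf.clm_apply contDiffOn_const
  apply h2.congr
  intro p hp
  exact Px_eq_fderiv ((hv.differentiableOn (by simp)).differentiableAt
    (hΩ.mem_nhds hp))

lemma Py_smooth (hΩ : IsOpen Ω) {v : ℝ × ℝ → ℂ} {K : ℕ}
    (hv : ContDiffOn ℝ (K + 1 : ℕ) v Ω) : ContDiffOn ℝ (K : ℕ) (Py v) Ω := by
  have hf : ContDiffOn ℝ (K : ℕ) (fderiv ℝ v) Ω := by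
    apply hv.fderiv_of_isOpen hΩ
    exact_mod_cast le_refl _
  have h2 : ContDiffOn ℝ (K : ℕ) (fun p => fderiv ℝ v p (0, 1)) Ω :=
    hf.clm_apply contDiffOn_const
  apply h2.congr
  intro p hp
  exact Py_eq_fderiv ((hv.differentiableOn (by simp)).differentiableAt
    (hΩ.mem_nhds hp))

lemma Py_iter_smooth (hΩ : IsOpen Ω) : ∀ (n : ℕ) (K : ℕ) (v : ℝ × ℝ → ℂ),
    ContDiffOn ℝ (K + n : ℕ) v Ω → ContDiffOn ℝ (K : ℕ) (Py^[n] v) Ω := by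
  intro n
  induction n with
  | zero => intro K v hv; simpa using hv
  | succ n ih =>
    intro K v hv
    rw [Function.iterate_succ_apply]
    apply ih K (Py v)
    apply Py_smooth hΩ
    exact hv.of_le (by exact_mod_cast Nat.le_of_eq (by ring))

lemma Px_iter_smooth (hΩ : IsOpen Ω) : ∀ (n : ℕ) (K : ℕ) (v : ℝ × ℝ → ℂ),
    ContDiffOn ℝ (K + n : ℕ) v Ω → ContDiffOn ℝ (K : ℕ) (Px^[n] v) Ω := by
  intro n
  induction n with
  | zero => intro K v hv; simpa using hv
  | succ n ih =>
    intro K v hv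
    rw [Function.iterate_succ_apply]
    apply ih K (Px v)
    apply Px_smooth hΩ
    exact hv.of_le (by exact_mod_cast Nat.le_of_eq (by ring))

end smooth

section clairaut
variable {Ω : Set (ℝ × ℝ)}

lemma clairaut (hΩ : IsOpen Ω) {v : ℝ × ℝ → ℂ} (hv : ContDiffOn ℝ (2 : ℕ) v Ω)
    {p : ℝ × ℝ} (hp : p ∈ Ω) : Px (Py v) p = Py (Px v) p := by
  have hmem : Ω ∈ nhds p := hΩ.mem_nhds hp
  have hvat : ContDiffAt ℝ (2 : ℕ) v p := hv.contDiffAt hmem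
  have hd1 : ∀ q ∈ Ω, DifferentiableAt ℝ v q := fun q hq =>
    (hv.differentiableOn (by simp)).differentiableAt (hΩ.mem_nhds hq)
  have hDdiff : DifferentiableAt ℝ (fderiv ℝ v) p :=
    (hvat.fderiv_right (m := 1) (by exact_mod_cast le_refl _)).differentiableAt
      (by simp)
  have hsymm : IsSymmSndFDerivAt ℝ v p := hvat.isSymmSndFDerivAt (by simp)
  set W := fderiv ℝ (fderiv ℝ v) p with hW
  -- Px (Py v) p = W (1,0) (0,1)
  have h1 : Px (Py v) p = W (1, 0) (0, 1) := by
    have hnb : ∀ᶠ s in nhds p.1, (s, p.2) ∈ Ω := by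
      have hc : Continuous fun s : ℝ => (s, p.2) := by fun_prop
      exact hc.continuousAt.preimage_mem_nhds (hΩ.mem_nhds (by simpa using hp))
    have heq : (fun s => Py v (s, p.2)) =ᶠ[nhds p.1] fun s => fderiv ℝ v (s, p.2) (0, 1) := by
      filter_upwards [hnb] with s hs using Py_eq_fderiv (hd1 _ hs)
    rw [Px]
    rw [heq.deriv_eq]
    have hin : HasDerivAt (fun s : ℝ => (s, p.2)) ((1 : ℝ), (0 : ℝ)) p.1 :=
      HasDerivAt.prodMk (hasDerivAt_id p.1) (hasDerivAt_const p.1 p.2)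
    have hL : HasFDerivAt (fun q => fderiv ℝ v q (0, 1))
        ((ContinuousLinearMap.apply ℝ ℂ ((0:ℝ), (1:ℝ))).comp W) p :=
      (ContinuousLinearMap.apply ℝ ℂ ((0:ℝ), (1:ℝ))).hasFDerivAt.comp p hDdiff.hasFDerivAt
    have := hL.comp_hasDerivAt p.1 (by simpa using hin)
    simpa [Function.comp_def] using this.deriv
  have h2 : Py (Px v) p = W (0, 1) (1, 0) := by
    have hnb : ∀ᶠ t in nhds p.2, (p.1, t) ∈ Ω := by
      have hc : Continuous fun t : ℝ => (p.1, t) := by fun_prop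
      exact hc.continuousAt.preimage_mem_nhds (hΩ.mem_nhds (by simpa using hp))
    have heq : (fun t => Px v (p.1, t)) =ᶠ[nhds p.2] fun t => fderiv ℝ v (p.1, t) (1, 0) := by
      filter_upwards [hnb] with t ht using Px_eq_fderiv (hd1 _ ht)
    rw [Py]
    rw [heq.deriv_eq]
    have hin : HasDerivAt (fun t : ℝ => (p.1, t)) ((0 : ℝ), (1 : ℝ)) p.2 :=
      HasDerivAt.prodMk (hasDerivAt_const p.2 p.1) (hasDerivAt_id p.2)
    have hL : HasFDerivAt (fun q => fderiv ℝ v q (1, 0))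
        ((ContinuousLinearMap.apply ℝ ℂ ((1:ℝ), (0:ℝ))).comp W) p :=
      (ContinuousLinearMap.apply ℝ ℂ ((1:ℝ), (0:ℝ))).hasFDerivAt.comp p hDdiff.hasFDerivAt
    have := hL.comp_hasDerivAt p.2 (by simpa using hin)
    simpa [Function.comp_def] using this.deriv
  rw [h1, h2, hsymm.eq]

lemma swapPxPy (hΩ : IsOpen Ω) : ∀ (n : ℕ) (v : ℝ × ℝ → ℂ),
    ContDiffOn ℝ (n + 1 : ℕ) v Ω → ∀ p ∈ Ω, Px (Py^[n] v) p = Py^[n] (Px v) p := by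
  intro n
  induction n with
  | zero => intro v _ p _; rfl
  | succ n ih =>
    intro v hv p hp
    rw [Function.iterate_succ_apply]
    rw [ih (Py v) (Py_smooth hΩ (by exact_mod_cast hv)) p hp]
    have hcl : ∀ q ∈ Ω, Px (Py v) q = Py (Px v) q := fun q hq =>
      clairaut hΩ (hv.of_le (by exact_mod_cast by omega)) hq
    rw [Py_iter_congr hΩ n _ _ hcl p hp, ← Function.iterate_succ_apply]
end clairaut

section linearity
variable {Ω : Set (ℝ × ℝ)}

lemma diffAt_slice_y {v : ℝ × ℝ → ℂ} {p : ℝ × ℝ} (h : DifferentiableAt ℝ v p) :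
    DifferentiableAt ℝ (fun t => v (p.1, t)) p.2 := by
  have hin : DifferentiableAt ℝ (fun t : ℝ => ((p.1 : ℝ), t)) p.2 :=
    DifferentiableAt.prodMk (differentiableAt_const _) differentiableAt_id
  exact (h.comp p.2 (by simpa using hin))

lemma diffAt_slice_x {v : ℝ × ℝ → ℂ} {p : ℝ × ℝ} (h : DifferentiableAt ℝ v p) :
    DifferentiableAt ℝ (fun s => v (s, p.2)) p.1 := by
  have hin : DifferentiableAt ℝ (fun s : ℝ => (s, (p.2 : ℝ))) p.1 :=
    differentiableAt_id.prodMk (differentiableAt_const _)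
  exact (h.comp p.1 (by simpa using hin))

lemma Py_add (hΩ : IsOpen Ω) {v w : ℝ × ℝ → ℂ}
    (hv : ContDiffOn ℝ (1 : ℕ) v Ω) (hw : ContDiffOn ℝ (1 : ℕ) w Ω) {p : ℝ × ℝ} (hp : p ∈ Ω) :
    Py (fun q => v q + w q) p = Py v p + Py w p := by
  have hv' : DifferentiableAt ℝ v p :=
    (hv.differentiableOn (by simp)).differentiableAt (hΩ.mem_nhds hp)
  have hw' : DifferentiableAt ℝ w p :=
    (hw.differentiableOn (by simp)).differentiableAt (hΩ.mem_nhds hp)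
  exact deriv_fun_add (diffAt_slice_y hv') (diffAt_slice_y hw')

lemma Px_add (hΩ : IsOpen Ω) {v w : ℝ × ℝ → ℂ}
    (hv : ContDiffOn ℝ (1 : ℕ) v Ω) (hw : ContDiffOn ℝ (1 : ℕ) w Ω) {p : ℝ × ℝ} (hp : p ∈ Ω) :
    Px (fun q => v q + w q) p = Px v p + Px w p := by
  have hv' : DifferentiableAt ℝ v p :=
    (hv.differentiableOn (by simp)).differentiableAt (hΩ.mem_nhds hp)
  have hw' : DifferentiableAt ℝ w p :=
    (hw.differentiableOn (by simp)).differentiableAt (hΩ.mem_nhds hp)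
  exact deriv_fun_add (diffAt_slice_x hv') (diffAt_slice_x hw')

lemma Py_iter_add (hΩ : IsOpen Ω) : ∀ (n : ℕ) (v w : ℝ × ℝ → ℂ),
    ContDiffOn ℝ (n : ℕ) v Ω → ContDiffOn ℝ (n : ℕ) w Ω →
    ∀ p ∈ Ω, Py^[n] (fun q => v q + w q) p = Py^[n] v p + Py^[n] w p := by
  intro n
  induction n with
  | zero => intro v w _ _ p _; rfl
  | succ n ih =>
    intro v w hv hw p hp
    rw [Function.iterate_succ_apply, Function.iterate_succ_apply, Function.iterate_succ_apply]
    have h1 : ∀ q ∈ Ω, Py (fun q => v q + w q) q = (fun q => Py v q + Py w q) q := fun q hq =>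
      Py_add hΩ (hv.of_le (by exact_mod_cast by omega)) (hw.of_le (by exact_mod_cast by omega)) hq
    rw [Py_iter_congr hΩ n _ _ h1 p hp]
    exact ih (Py v) (Py w) (Py_smooth hΩ (by exact_mod_cast hv)) (Py_smooth hΩ (by exact_mod_cast hw)) p hp

lemma Px_iter_add (hΩ : IsOpen Ω) : ∀ (n : ℕ) (v w : ℝ × ℝ → ℂ),
    ContDiffOn ℝ (n : ℕ) v Ω → ContDiffOn ℝ (n : ℕ) w Ω →
    ∀ p ∈ Ω, Px^[n] (fun q => v q + w q) p = Px^[n] v p + Px^[n] w p := by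
  intro n
  induction n with
  | zero => intro v w _ _ p _; rfl
  | succ n ih =>
    intro v w hv hw p hp
    rw [Function.iterate_succ_apply, Function.iterate_succ_apply, Function.iterate_succ_apply]
    have h1 : ∀ q ∈ Ω, Px (fun q => v q + w q) q = (fun q => Px v q + Px w q) q := fun q hq =>
      Px_add hΩ (hv.of_le (by exact_mod_cast by omega)) (hw.of_le (by exact_mod_cast by omega)) hq
    rw [Px_iter_congr hΩ n _ _ h1 p hp]
    exact ih (Px v) (Px w) (Px_smooth hΩ (by exact_mod_cast hv)) (Px_smooth hΩ (by exact_mod_cast hw)) p hp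

lemma pditer_add (hΩ : IsOpen Ω) (a b : ℕ) (v w : ℝ × ℝ → ℂ)
    (hv : ContDiffOn ℝ (a + b : ℕ) v Ω) (hw : ContDiffOn ℝ (a + b : ℕ) w Ω)
    {p : ℝ × ℝ} (hp : p ∈ Ω) :
    Px^[a] (Py^[b] (fun q => v q + w q)) p = Px^[a] (Py^[b] v) p + Px^[a] (Py^[b] w) p := by
  have h1 : ∀ q ∈ Ω, Py^[b] (fun q => v q + w q) q = (fun q => Py^[b] v q + Py^[b] w q) q :=
    fun q hq => Py_iter_add hΩ b v w (hv.of_le (by exact_mod_cast by omega))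
      (hw.of_le (by exact_mod_cast by omega)) q hq
  rw [Px_iter_congr hΩ a _ _ h1 p hp]
  exact Px_iter_add hΩ a _ _ (Py_iter_smooth hΩ b a v (by exact_mod_cast hv))
    (Py_iter_smooth hΩ b a w (by exact_mod_cast hw)) p hp

lemma Py_iter_const_mul (c : ℂ) : ∀ (n : ℕ) (v : ℝ × ℝ → ℂ) (p : ℝ × ℝ),
    Py^[n] (fun q => c * v q) p = c * Py^[n] v p := by
  intro n
  induction n with
  | zero => intro v p; rfl
  | succ n ih =>
    intro v p
    rw [Function.iterate_succ_apply, Function.iterate_succ_apply]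
    have : Py (fun q => c * v q) = fun q => c * Py v q := by
      funext q; exact deriv_const_mul_field c
    rw [this]; exact ih (Py v) p

lemma Px_iter_const_mul (c : ℂ) : ∀ (n : ℕ) (v : ℝ × ℝ → ℂ) (p : ℝ × ℝ),
    Px^[n] (fun q => c * v q) p = c * Px^[n] v p := by
  intro n
  induction n with
  | zero => intro v p; rfl
  | succ n ih =>
    intro v p
    rw [Function.iterate_succ_apply, Function.iterate_succ_apply]
    have : Px (fun q => c * v q) = fun q => c * Px v q := by
      funext q; exact deriv_const_mul_field c
    rw [this]; exact ih (Px v) p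

end linearity


lemma helm_eq (κ : ℝ) (u : ℝ × ℝ → ℂ) :
    helm κ u = fun q => (Px^[2] u q + Py^[2] u q) + (κ : ℂ)^2 * u q := by
  funext q
  simp only [helm, pd_eq]
  congr 1

section recur
variable {Ω : Set (ℝ × ℝ)}

lemma swap2 (hΩ : IsOpen Ω) {u : ℝ × ℝ → ℂ} {n : ℕ}
    (hu : ContDiffOn ℝ (n + 2 : ℕ) u Ω) {p : ℝ × ℝ} (hp : p ∈ Ω) :
    Py^[n] (Px^[2] u) p = Px^[2] (Py^[n] u) p := by
  have h1 : ∀ q ∈ Ω, Px (Py^[n] u) q = Py^[n] (Px u) q := fun q hq =>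
    swapPxPy hΩ n u (hu.of_le (by exact_mod_cast by omega)) q hq
  have h2 : Px (Px (Py^[n] u)) p = Px (Py^[n] (Px u)) p := Px_congr hΩ h1 p hp
  have h3 : Px (Py^[n] (Px u)) p = Py^[n] (Px (Px u)) p :=
    swapPxPy hΩ n (Px u) (Px_smooth hΩ (by exact_mod_cast hu)) p hp
  have e1 : Px^[2] u = Px (Px u) := rfl
  have e2 : Px^[2] (Py^[n] u) = Px (Px (Py^[n] u)) := rfl
  rw [e1, e2, h2, h3]

lemma recurrence (κ : ℝ) (M : ℕ) (hΩ : IsOpen Ω) {u : ℝ × ℝ → ℂ}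
    (hu : ContDiffOn ℝ (M + 1 : ℕ) u Ω) {xs ys : ℝ} (hp : (xs, ys) ∈ Ω)
    (a n : ℕ) (h : a + n + 2 ≤ M + 1) :
    pd u (a + 2) n xs ys =
      pd (helm κ u) a n xs ys - pd u a (n + 2) xs ys - (κ : ℂ)^2 * pd u a n xs ys := by
  have hab : (a + n : ℕ) ≤ (M + 1 : ℕ) := by omega
  have hu' : ContDiffOn ℝ (a + n + 2 : ℕ) u Ω := hu.of_le (by exact_mod_cast h)
  have hw1 : ContDiffOn ℝ (a + n : ℕ) (Px^[2] u) Ω :=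
    Px_iter_smooth hΩ 2 (a + n) u (by exact_mod_cast hu')
  have hw2 : ContDiffOn ℝ (a + n : ℕ) (Py^[2] u) Ω :=
    Py_iter_smooth hΩ 2 (a + n) u (by exact_mod_cast hu')
  have hw3 : ContDiffOn ℝ (a + n : ℕ) (fun q => (κ : ℂ)^2 * u q) Ω :=
    contDiffOn_const.mul (hu.of_le (by exact_mod_cast by omega))
  have key : pd (helm κ u) a n xs ys =
      Px^[a] (Py^[n] (Px^[2] u)) (xs, ys) + Px^[a] (Py^[n] (Py^[2] u)) (xs, ys)
        + (κ : ℂ)^2 * Px^[a] (Py^[n] u) (xs, ys) := by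
    rw [pd_eq, helm_eq]
    rw [pditer_add hΩ a n _ _ (hw1.add hw2) hw3 hp]
    rw [pditer_add hΩ a n _ _ hw1 hw2 hp]
    congr 1
    have : Py^[n] (fun q => (κ:ℂ)^2 * u q) = fun q => (κ:ℂ)^2 * Py^[n] u q := by
      funext q; exact Py_iter_const_mul _ n u q
    rw [this]
    exact Px_iter_const_mul _ a _ _
  have t1 : Px^[a] (Py^[n] (Px^[2] u)) (xs, ys) = pd u (a + 2) n xs ys := by
    have hswap : ∀ q ∈ Ω, Py^[n] (Px^[2] u) q = Px^[2] (Py^[n] u) q := fun q hq =>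
      swap2 hΩ (hu.of_le (by exact_mod_cast by omega)) hq
    rw [Px_iter_congr hΩ a _ _ hswap _ hp, pd_eq, ← Function.iterate_add_apply]
  have t2 : Px^[a] (Py^[n] (Py^[2] u)) (xs, ys) = pd u a (n + 2) xs ys := by
    rw [pd_eq, ← Function.iterate_add_apply]
  rw [key, t1, t2, pd_eq u a n]
  ring

end recur

section AlgPart
open Finset

lemma pascal_sum (x : ℂ) (h : ℕ) (a : ℕ → ℂ) :
    ∑ q ∈ range (h + 2), (Nat.choose (h + 1) q : ℂ) * x ^ q * a q
      = ∑ q ∈ range (h + 2), (Nat.choose h q : ℂ) * x ^ q * a q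
        + x * ∑ q ∈ range (h + 1), (Nat.choose h q : ℂ) * x ^ q * a (q + 1) := by
  rw [Finset.sum_range_succ' (fun q => (Nat.choose (h+1) q : ℂ) * x ^ q * a q) (h+1),
      Finset.sum_range_succ' (fun q => (Nat.choose h q : ℂ) * x ^ q * a q) (h+1),
      Finset.mul_sum]
  have key : ∀ q ∈ range (h+1), (Nat.choose (h+1) (q+1) : ℂ) * x^(q+1) * a (q+1)
      = (Nat.choose h (q+1) : ℂ) * x^(q+1) * a (q+1) + x * ((Nat.choose h q : ℂ) * x^q * a (q+1)) := by
    intro q _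
    rw [Nat.choose_succ_succ]
    push_cast
    ring
  rw [Finset.sum_congr rfl key, Finset.sum_add_distrib]
  simp only [Nat.choose_zero_right]
  ring

lemma pascal_sum' (x : ℂ) (p : ℕ) (G : ℕ → ℂ) :
    ∑ j ∈ range (p + 2), (Nat.choose (p + 1) j : ℂ) * x ^ (p + 1 - j) * G j
      = x * ∑ j ∈ range (p + 1), (Nat.choose p j : ℂ) * x ^ (p - j) * G j
        + ∑ j ∈ range (p + 1), (Nat.choose p j : ℂ) * x ^ (p - j) * G (j + 1) := by
  rw [Finset.sum_range_succ' (fun j => (Nat.choose (p+1) j : ℂ) * x ^ (p+1-j) * G j) (p+1),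
      Finset.mul_sum,
      Finset.sum_range_succ' (fun j => x * ((Nat.choose p j : ℂ) * x ^ (p-j) * G j)) p]
  have key : ∀ j ∈ range (p+1), (Nat.choose (p+1) (j+1) : ℂ) * x ^ (p+1-(j+1)) * G (j+1)
      = (Nat.choose p (j+1) : ℂ) * x ^ (p-(j+1)) * x ^ (min 1 (p - j)) * G (j+1)
        + (Nat.choose p j : ℂ) * x ^ (p-j) * G (j+1) := by
    intro j hj
    simp only [mem_range] at hj
    rw [Nat.choose_succ_succ]
    push_cast
    simp only [Nat.succ_eq_add_one]
    rcases Nat.lt_or_ge (j+1) (p+1) with hlt | hge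
    · have e2 : min 1 (p - j) = 1 := by omega
      have e3 : p - j = (p - (j+1)) + 1 := by omega
      rw [e2, e3]
      ring
    · have : Nat.choose p (j+1) = 0 := Nat.choose_eq_zero_of_lt (by omega)
      rw [this]
      push_cast
      ring
  rw [Finset.sum_congr rfl key, Finset.sum_add_distrib]
  have key2 : ∀ j ∈ range p, x * ((Nat.choose p (j+1) : ℂ) * x ^ (p-(j+1)) * G (j+1))
      = (Nat.choose p (j+1) : ℂ) * x ^ (p-(j+1)) * x ^ (min 1 (p - j)) * G (j+1) := by
    intro j hj
    simp only [mem_range] at hj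
    have e2 : min 1 (p - j) = 1 := by omega
    rw [e2]
    ring
  rw [Finset.sum_congr rfl key2]
  have last : ((Nat.choose p p : ℂ) * x ^ (p - p) * x ^ (min 1 (p - p)) * G (p + 1)) =
      ((Nat.choose p p : ℂ) * x ^ (p - p) * x ^ 0 * G (p + 1)) * x ^ (min 1 0) := by
    simp
  -- assemble
  rw [Finset.sum_range_succ (fun j => (Nat.choose p (j+1) : ℂ) * x ^ (p-(j+1)) * x ^ (min 1 (p - j)) * G (j+1)) p]
  simp only [Nat.choose_succ_self, Nat.cast_zero, zero_mul, add_zero, Nat.choose_zero_right,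
    Nat.cast_one, one_mul, Nat.sub_zero, Nat.sub_self, pow_zero]
  ring

lemma alg (x : ℂ) (N : ℕ) (A F : ℕ → ℕ → ℂ)
    (hrec : ∀ a n, a + n + 2 ≤ N → A (a+2) n = F a n - A a (n+2) - x * A a n) :
    ∀ h, 1 ≤ h → ∀ r n, r ≤ 1 → 2*h + r + n ≤ N →
      A (2*h+r) n
        = (-1:ℂ)^h * ∑ q ∈ range (h+1), (Nat.choose h q : ℂ) * x^q * A r (2*h+n-2*q)
          + ∑ q ∈ Icc 1 h, ∑ j ∈ range q,
              (-1:ℂ)^(q-1) * (Nat.choose (q-1) j : ℂ) * x^(q-j-1) * F (2*h+r-2*q) (n+2*j) := by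
  intro h h1
  induction h, h1 using Nat.le_induction with
  | base =>
    intro r n hr hn
    have hbase := hrec r n (by omega)
    rw [show 2*1+r = r+2 from by omega, hbase]
    rw [Finset.sum_range_succ, Finset.sum_range_one, Finset.Icc_self, Finset.sum_singleton,
      Finset.sum_range_one]
    rw [show 2*1+n-2*0 = n+2 from by omega, show 2*1+n-2*1 = n from by omega,
      show r+2-2*1 = r from by omega, show n+2*0 = n from by omega]
    norm_num
    ring
  | succ h hh IH =>
    intro r n hr hn
    have hrec' := hrec (2*h+r) n (by omega)
    have IH1 := IH r (n+2) hr (by omega)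
    have IH2 := IH r n hr (by omega)
    rw [show 2*(h+1)+r = (2*h+r)+2 from by omega, hrec', IH1, IH2]
    -- Binomial part
    have ps := pascal_sum x h (fun q => A r (2*(h+1)+n-2*q))
    have e1 : ∑ q ∈ range (h+2), (Nat.choose h q : ℂ) * x^q * A r (2*(h+1)+n-2*q)
        = ∑ q ∈ range (h+1), (Nat.choose h q : ℂ) * x^q * A r (2*h+(n+2)-2*q) := by
      rw [Finset.sum_range_succ, Nat.choose_eq_zero_of_lt (by omega)]
      push_cast
      rw [zero_mul, zero_mul, add_zero]
      exact Finset.sum_congr rfl fun q _ => by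
        rw [show 2*(h+1)+n-2*q = 2*h+(n+2)-2*q from by omega]
    have e2 : ∑ q ∈ range (h+1), (Nat.choose h q : ℂ) * x^q * A r (2*(h+1)+n-2*(q+1))
        = ∑ q ∈ range (h+1), (Nat.choose h q : ℂ) * x^q * A r (2*h+n-2*q) :=
      Finset.sum_congr rfl fun q _ => by
        rw [show 2*(h+1)+n-2*(q+1) = 2*h+n-2*q from by omega]
    rw [e1, e2] at ps
    -- F part termwise
    have inner : ∀ i ∈ range h,
        (∑ j ∈ range (1+(i+1)), (-1:ℂ)^(1+(i+1)-1) * (Nat.choose (1+(i+1)-1) j : ℂ)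
            * x^(1+(i+1)-j-1) * F (2*h+r+2-2*(1+(i+1))) (n+2*j))
        = -(∑ j ∈ range (1+i), (-1:ℂ)^(1+i-1) * (Nat.choose (1+i-1) j : ℂ)
              * x^(1+i-j-1) * F (2*h+r-2*(1+i)) ((n+2)+2*j))
          - x * (∑ j ∈ range (1+i), (-1:ℂ)^(1+i-1) * (Nat.choose (1+i-1) j : ℂ)
              * x^(1+i-j-1) * F (2*h+r-2*(1+i)) (n+2*j)) := by
      intro i hi
      have ps' := pascal_sum' x i (fun j => F (2*h+r-2*(i+1)) (n+2*j))
      have eL : ∑ j ∈ range (1+(i+1)), (-1:ℂ)^(1+(i+1)-1) * (Nat.choose (1+(i+1)-1) j : ℂ)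
            * x^(1+(i+1)-j-1) * F (2*h+r+2-2*(1+(i+1))) (n+2*j)
          = (-1:ℂ)^(i+1) * ∑ j ∈ range (i+2), (Nat.choose (i+1) j : ℂ) * x^(i+1-j)
              * F (2*h+r-2*(i+1)) (n+2*j) := by
        rw [Finset.mul_sum, show 1+(i+1) = i+2 from by omega]
        refine Finset.sum_congr rfl fun j hj => ?_
        simp only [mem_range] at hj
        rw [show i+2-1 = i+1 from by omega, show i+2-j-1 = i+1-j from by omega,
          show 2*h+r+2-2*(i+2) = 2*h+r-2*(i+1) from by omega]
        ring
      have eR1 : ∑ j ∈ range (1+i), (-1:ℂ)^(1+i-1) * (Nat.choose (1+i-1) j : ℂ)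
            * x^(1+i-j-1) * F (2*h+r-2*(1+i)) ((n+2)+2*j)
          = (-1:ℂ)^i * ∑ j ∈ range (i+1), (Nat.choose i j : ℂ) * x^(i-j)
              * F (2*h+r-2*(i+1)) (n+2*(j+1)) := by
        rw [Finset.mul_sum, show 1+i = i+1 from by omega]
        refine Finset.sum_congr rfl fun j hj => ?_
        simp only [mem_range] at hj
        rw [show i+1-1 = i from by omega, show i+1-j-1 = i-j from by omega,
          show 2*h+r-2*(i+1) = 2*h+r-2*(i+1) from rfl, show (n+2)+2*j = n+2*(j+1) from by omega]
        ring
      have eR2 : ∑ j ∈ range (1+i), (-1:ℂ)^(1+i-1) * (Nat.choose (1+i-1) j : ℂ)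
            * x^(1+i-j-1) * F (2*h+r-2*(1+i)) (n+2*j)
          = (-1:ℂ)^i * ∑ j ∈ range (i+1), (Nat.choose i j : ℂ) * x^(i-j)
              * F (2*h+r-2*(i+1)) (n+2*j) := by
        rw [Finset.mul_sum, show 1+i = i+1 from by omega]
        refine Finset.sum_congr rfl fun j hj => ?_
        simp only [mem_range] at hj
        rw [show i+1-1 = i from by omega, show i+1-j-1 = i-j from by omega]
        ring
      rw [eL, eR1, eR2]
      rw [ps']
      ring
    rw [show h+1+1 = h+2 from by omega, ps]
    simp only [← Finset.Ico_add_one_right_eq_Icc, Finset.sum_Ico_eq_sum_range]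
    rw [show h+1+1-1 = h+1 from by omega, show h+1-1 = h from by omega]
    rw [Finset.sum_range_succ' (fun i => ∑ j ∈ range (1+i), (-1:ℂ)^(1+i-1)
        * (Nat.choose (1+i-1) j : ℂ) * x^(1+i-j-1) * F (2*h+r+2-2*(1+i)) (n+2*j)) h]
    rw [Finset.sum_congr rfl inner]
    have g0 : (∑ j ∈ range (1+0), (-1:ℂ)^(1+0-1) * (Nat.choose (1+0-1) j : ℂ)
        * x^(1+0-j-1) * F (2*h+r+2-2*(1+0)) (n+2*j)) = F (2*h+r) n := by
      rw [show (1:ℕ)+0 = 1 from rfl, Finset.sum_range_one,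
        show 2*h+r+2-2*1 = 2*h+r from by omega, show n+2*0 = n from by omega]
      norm_num
    rw [g0, Finset.sum_sub_distrib, Finset.sum_neg_distrib, ← Finset.mul_sum]
    ring

end AlgPart

/-- dependence of `u^{(m,n)}` for `(m,n) ∈ Λ_{M+1}^2` on lower-order
`x`-derivatives, via the Helmholtz equation `Δu + κ²u = f`. -/
theorem statement0 (κ : ℝ) (M : ℕ) (Ω : Set (ℝ × ℝ)) (hΩ : IsOpen Ω)
    (xs ys : ℝ) (hmem : (xs, ys) ∈ Ω) (u : ℝ × ℝ → ℂ)
    (hu : ContDiffOn ℝ ((M : ℕ∞) + 1) u Ω) :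
    ∀ m n : ℕ, (m, n) ∈ Lam2 (M + 1) →
      pd u m n xs ys =
        (-1 : ℂ) ^ (m / 2) *
            ∑ q ∈ Finset.range (m / 2 + 1),
              (Nat.choose (m / 2) q : ℂ) * (κ : ℂ) ^ (2 * q) *
                pd u (m % 2) (2 * (m / 2) + n - 2 * q) xs ys
        + ∑ q ∈ Finset.Icc 1 (m / 2), ∑ j ∈ Finset.range q,
            (-1 : ℂ) ^ (q - 1) * (Nat.choose (q - 1) j : ℂ) *
              (κ : ℂ) ^ (2 * (q - j - 1)) *
                pd (helm κ u) (m - 2 * q) (n + 2 * j) xs ys := by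
  intro m n hmn
  simp only [Lam2, Lam, Finset.mem_filter, Finset.mem_product, Finset.mem_range] at hmn
  obtain ⟨⟨-, hle⟩, h2m⟩ := hmn
  have hu2 : ContDiffOn ℝ ((M + 1 : ℕ)) u Ω := by exact_mod_cast hu
  have hrec : ∀ a n, a + n + 2 ≤ M + 1 →
      pd u (a+2) n xs ys = pd (helm κ u) a n xs ys - pd u a (n+2) xs ys
        - (κ:ℂ)^2 * pd u a n xs ys := fun a n h => recurrence κ M hΩ hu2 hmem a n h
  have R := alg ((κ:ℂ)^2) (M+1) (fun a b => pd u a b xs ys) (fun a b => pd (helm κ u) a b xs ys)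
    hrec (m / 2) (by omega) (m % 2) n (by omega) (by omega)
  rw [Nat.div_add_mod m 2] at R
  simp only [← pow_mul] at R
  exact R
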